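/- Let A be a weakly monotone allocation for additive valuations. Fix a bid vector t of additive valuations and let S = A_i(t) be the set of tasks assigned to player i. If t' = (t'_i, t_{-i}) is obtained by strictly decreasing player i's value on every task in S (t'_i({j}) < t_i({j}) for j ∈ S) and strictly increasing it on every task outside S (t'_i({j}) > t_i({j}) for j ∉ S), then A_i(t') = S. -/

import Mathlib

/-- For a WMON allocation on additive valuations, if player `i`
strictly decreases her value on every task she receives and strictly increases
it on every other task, her allocated set does not change. -/
theorem WMON_allocation_stable {ι M : Type*} [DecidableEq ι] [Fintype M] [DecidableEq M]
    (A : (ι → M → ℝ) → ι → Finset M)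
    (hW : ∀ (i : ι) (b : ι → M → ℝ) (ti t'i : M → ℝ),
      (∑ j ∈ A (Function.update b i ti) i, ti j) -
          (∑ j ∈ A (Function.update b i t'i) i, ti j) ≤
        (∑ j ∈ A (Function.update b i ti) i, t'i j) -
          (∑ j ∈ A (Function.update b i t'i) i, t'i j))
    (i : ι) (t : ι → M → ℝ) (t'i : M → ℝ)
    (hdec : ∀ j ∈ A t i, t'i j < t i j)
    (hinc : ∀ j ∉ A t i, t i j < t'i j) :
    A (Function.update t i t'i) i = A t i := by
  set S := A t i with hS
  set S' := A (Function.update t i t'i) i with hS'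
  have h := hW i t (t i) t'i
  rw [Function.update_eq_self] at h
  -- turn into sums of f j := t i j - t'i j
  have hsum : ∑ j ∈ S \ S', (t i j - t'i j) ≤ ∑ j ∈ S' \ S, (t i j - t'i j) := by
    have h1 : ∑ j ∈ S, (t i j - t'i j) ≤ ∑ j ∈ S', (t i j - t'i j) := by
      rw [Finset.sum_sub_distrib, Finset.sum_sub_distrib]
      linarith
    have e1 : ∑ j ∈ S ∩ S', (t i j - t'i j) + ∑ j ∈ S \ S', (t i j - t'i j)
        = ∑ j ∈ S, (t i j - t'i j) := Finset.sum_inter_add_sum_sdiff _ _ _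
    have e2 : ∑ j ∈ S' ∩ S, (t i j - t'i j) + ∑ j ∈ S' \ S, (t i j - t'i j)
        = ∑ j ∈ S', (t i j - t'i j) := Finset.sum_inter_add_sum_sdiff _ _ _
    rw [Finset.inter_comm] at e2
    linarith
  have hle : ∑ j ∈ S' \ S, (t i j - t'i j) ≤ 0 :=
    Finset.sum_nonpos (fun j hj => by
      have := hinc j (Finset.mem_sdiff.mp hj).2; linarith)
  have hge : (0:ℝ) ≤ ∑ j ∈ S \ S', (t i j - t'i j) :=
    Finset.sum_nonneg (fun j hj => by
      have := hdec j (Finset.mem_sdiff.mp hj).1; linarith)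
  have hd1 : S \ S' = ∅ := by
    by_contra hne
    obtain ⟨x, hx⟩ := Finset.nonempty_iff_ne_empty.mpr hne
    have hpos : 0 < ∑ j ∈ S \ S', (t i j - t'i j) :=
      Finset.sum_pos' (fun j hj => by
        have := hdec j (Finset.mem_sdiff.mp hj).1; linarith)
        ⟨x, hx, by have := hdec x (Finset.mem_sdiff.mp hx).1; linarith⟩
    linarith
  have hd2 : S' \ S = ∅ := by
    by_contra hne
    obtain ⟨x, hx⟩ := Finset.nonempty_iff_ne_empty.mpr hne
    have hneg : ∑ j ∈ S' \ S, (t i j - t'i j) < 0 := by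
      have : 0 < ∑ j ∈ S' \ S, (t'i j - t i j) :=
        Finset.sum_pos' (fun j hj => by
          have := hinc j (Finset.mem_sdiff.mp hj).2; linarith)
          ⟨x, hx, by have := hinc x (Finset.mem_sdiff.mp hx).2; linarith⟩
      have e : ∑ j ∈ S' \ S, (t i j - t'i j)
          = -∑ j ∈ S' \ S, (t'i j - t i j) := by
        rw [← Finset.sum_neg_distrib]; apply Finset.sum_congr rfl; intros; ring
      linarith
    linarith
  exact Finset.Subset.antisymm
    (Finset.sdiff_eq_empty_iff_subset.mp hd2)
    (Finset.sdiff_eq_empty_iff_subset.mp hd1)
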